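/- Let Δ ⊂ ℝⁿ be a simple polytope and suppose H = Σ_i β_i η_i where Σ_{i∈I} β_i = 0 for every equivalence class of facets I (H is inessential). Then ⟨H, c_Δ(κ)⟩ = Σ_i β_i κ_i for all κ in the chamber C_Δ; in particular H is mass linear. -/

import Mathlib

open MeasureTheory Function Set

noncomputable section

namespace MassLinearPaper

def dotp {n : ℕ} (v x : Fin n → ℝ) : ℝ := ∑ j, v j * x j

def polytope {n N : ℕ} (η : Fin N → Fin n → ℝ) (κ : Fin N → ℝ) : Set (Fin n → ℝ) :=
  {x | ∀ i, dotp (η i) x ≤ κ i}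

def facet {n N : ℕ} (η : Fin N → Fin n → ℝ) (κ : Fin N → ℝ) (i : Fin N) : Set (Fin n → ℝ) :=
  {x ∈ polytope η κ | dotp (η i) x = κ i}

/-- A polytope is simple if at each point the active conormals are linearly independent. -/
def IsSimplePoly {n N : ℕ} (η : Fin N → Fin n → ℝ) (κ : Fin N → ℝ) : Prop :=
  ∀ x ∈ polytope η κ,
    LinearIndependent ℝ (fun i : {i : Fin N // dotp (η i) x = κ i} => η i.1)

/-- Two support vectors give analogous polytopes: the same collections of facets intersect. -/
def Analogous {n N : ℕ} (η : Fin N → Fin n → ℝ) (κ κ' : Fin N → ℝ) : Prop :=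
  ∀ I : Finset (Fin N),
    (⋂ i ∈ I, facet η κ' i).Nonempty ↔ (⋂ i ∈ I, facet η κ i).Nonempty

/-- The chamber of Δ(κ). -/
def chamber {n N : ℕ} (η : Fin N → Fin n → ℝ) (κ : Fin N → ℝ) : Set (Fin N → ℝ) :=
  connectedComponentIn {κ' | IsSimplePoly η κ' ∧ Analogous η κ κ'} κ

/-- Standing hypotheses: simple, bounded, nonempty interior, all facets nonempty. -/
def GoodPolytope {n N : ℕ} (η : Fin N → Fin n → ℝ) (κ : Fin N → ℝ) : Prop :=
  IsSimplePoly η κ ∧ Bornology.IsBounded (polytope η κ) ∧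
    (interior (polytope η κ)).Nonempty ∧ ∀ i, (facet η κ i).Nonempty

/-- The center of mass of Δ(κ). -/
def centroid {n N : ℕ} (η : Fin N → Fin n → ℝ) (κ : Fin N → ℝ) : Fin n → ℝ :=
  ⨍ x in polytope η κ, x

/-- The volume of Δ(κ) as a function of κ. -/
def volFn {n N : ℕ} (η : Fin N → Fin n → ℝ) : (Fin N → ℝ) → ℝ :=
  fun κ => (volume (polytope η κ)).toReal

/-- Partial derivative with respect to the i-th support number. -/
def pd {N : ℕ} (i : Fin N) (f : (Fin N → ℝ) → ℝ) : (Fin N → ℝ) → ℝ :=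
  fun κ => fderiv ℝ f κ (Pi.single i 1)

def face {n N : ℕ} (η : Fin N → Fin n → ℝ) (κ : Fin N → ℝ) (S : Finset (Fin N)) :
    Set (Fin n → ℝ) :=
  ⋂ i ∈ S, facet η κ i

/-- Centroid of a face with respect to Hausdorff measure of the appropriate dimension. -/
def faceCentroid {n N : ℕ} (η : Fin N → Fin n → ℝ) (κ : Fin N → ℝ) (S : Finset (Fin N)) :
    Fin n → ℝ :=
  ⨍ x in face η κ S, x ∂(μH[(n : ℝ) - S.card])

/-- The facet `F i` is H-symmetric: `⟨H, c(κ)⟩` does not depend on `κ i` on the chamber. -/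
def SymmFacet {n N : ℕ} (η : Fin N → Fin n → ℝ) (κ : Fin N → ℝ) (H : Fin n → ℝ)
    (i : Fin N) : Prop :=
  ∀ κ₁ ∈ chamber η κ, ∀ κ₂ ∈ chamber η κ, (∀ j, j ≠ i → κ₁ j = κ₂ j) →
    dotp H (centroid η κ₁) = dotp H (centroid η κ₂)

/-- H is mass linear with coefficients γ and constant C. -/
def MassLinear {n N : ℕ} (η : Fin N → Fin n → ℝ) (κ : Fin N → ℝ) (H : Fin n → ℝ)
    (γ : Fin N → ℝ) (C : ℝ) : Prop :=
  ∀ κ' ∈ chamber η κ, dotp H (centroid η κ') = ∑ i, γ i * κ' i + C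

/-- A facet is pervasive if it meets every other facet. -/
def Pervasive {n N : ℕ} (η : Fin N → Fin n → ℝ) (κ : Fin N → ℝ) (i : Fin N) : Prop :=
  ∀ j, j ≠ i → (facet η κ i ∩ facet η κ j).Nonempty

/-- A facet is flat if the conormals of all other facets meeting it lie in a hyperplane. -/
def FlatFacet {n N : ℕ} (η : Fin N → Fin n → ℝ) (κ : Fin N → ℝ) (i : Fin N) : Prop :=
  ∃ ξ : Fin n → ℝ, ξ ≠ 0 ∧
    ∀ j, j ≠ i → (facet η κ i ∩ facet η κ j).Nonempty → dotp (η j) ξ = 0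

/-- Equivalence of facets, via the criterion of Lemma 4.4. -/
def FacetEquiv {n N : ℕ} (η : Fin N → Fin n → ℝ) (i j : Fin N) : Prop :=
  i = j ∨ ∃ ξ : Fin n → ℝ, dotp (η i) ξ = 1 ∧ dotp (η j) ξ = -1 ∧
    ∀ k, k ≠ i → k ≠ j → dotp (η k) ξ = 0

def IsEquivClass {n N : ℕ} (η : Fin N → Fin n → ℝ) (I : Finset (Fin N)) : Prop :=
  I.Nonempty ∧ (∀ i ∈ I, ∀ j ∈ I, FacetEquiv η i j) ∧
    ∀ i ∈ I, ∀ j, FacetEquiv η i j → j ∈ I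

/-- H is inessential. -/
def Inessential {n N : ℕ} (η : Fin N → Fin n → ℝ) (H : Fin n → ℝ) : Prop :=
  ∃ β : Fin N → ℝ, H = ∑ i, β i • η i ∧
    ∀ I : Finset (Fin N), IsEquivClass η I → ∑ i ∈ I, β i = 0

end MassLinearPaper

open MassLinearPaper

namespace MassAux

variable {n N : ℕ}

lemma dotp_add_right (v x y : Fin n → ℝ) : dotp v (x + y) = dotp v x + dotp v y := by
  simp [dotp, mul_add, Finset.sum_add_distrib]

lemma dotp_sub_right (v x y : Fin n → ℝ) : dotp v (x - y) = dotp v x - dotp v y := by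
  simp [dotp, mul_sub, Finset.sum_sub_distrib]

lemma dotp_smul_right (v : Fin n → ℝ) (t : ℝ) (x : Fin n → ℝ) :
    dotp v (t • x) = t * dotp v x := by
  unfold dotp
  rw [Finset.mul_sum]
  exact Finset.sum_congr rfl fun j _ => by simp; ring

lemma dotp_sub_left (a b x : Fin n → ℝ) : dotp (a - b) x = dotp a x - dotp b x := by
  simp [dotp, sub_mul, Finset.sum_sub_distrib]

lemma dotp_smul_left (t : ℝ) (a x : Fin n → ℝ) : dotp (t • a) x = t * dotp a x := by
  unfold dotp
  rw [Finset.mul_sum]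
  exact Finset.sum_congr rfl fun j _ => by simp; ring

lemma dotp_sum_left {ι : Type*} (s : Finset ι) (f : ι → Fin n → ℝ) (x : Fin n → ℝ) :
    dotp (∑ i ∈ s, f i) x = ∑ i ∈ s, dotp (f i) x := by
  unfold dotp
  simp only [Finset.sum_apply, Finset.sum_mul]
  exact Finset.sum_comm

lemma continuous_dotp (v : Fin n → ℝ) : Continuous fun x : Fin n → ℝ => dotp v x := by
  unfold dotp
  exact continuous_finset_sum _ fun j _ => (continuous_const.mul (continuous_apply j))

lemma dotp_self_eq_zero {u : Fin n → ℝ} (h : dotp u u = 0) : u = 0 := by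
  funext j
  have h1 : ∀ k ∈ Finset.univ, (0:ℝ) ≤ u k * u k := fun k _ => mul_self_nonneg _
  have := (Finset.sum_eq_zero_iff_of_nonneg h1).mp h j (Finset.mem_univ j)
  simpa [mul_self_eq_zero] using this

lemma exists_dual {ι : Type} [Fintype ι] (f : ι → Fin n → ℝ)
    (h : LinearIndependent ℝ f) (c : ι → ℝ) : ∃ v, ∀ i, dotp (f i) v = c i := by
  classical
  let S : (ι → ℝ) →ₗ[ℝ] (Fin n → ℝ) :=
    { toFun := fun a => ∑ i, a i • f i
      map_add' := by intro a b; simp [add_smul, Finset.sum_add_distrib]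
      map_smul' := by intro t a; simp [smul_smul, Finset.smul_sum] }
  let T : (Fin n → ℝ) →ₗ[ℝ] (ι → ℝ) :=
    { toFun := fun v i => dotp (f i) v
      map_add' := by intro a b; funext i; simp [dotp_add_right]
      map_smul' := by intro t a; funext i; simp [dotp_smul_right] }
  have hG : Function.Injective (T ∘ₗ S) := by
    rw [← LinearMap.ker_eq_bot, LinearMap.ker_eq_bot']
    intro a ha
    have hTa : ∀ i, dotp (f i) (S a) = 0 := fun i => congrFun ha i
    have hSa : dotp (S a) (S a) = 0 := by
      have : dotp (S a) (S a) = ∑ i, a i * dotp (f i) (S a) := by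
        show dotp (∑ i, a i • f i) (S a) = _
        rw [dotp_sum_left]
        exact Finset.sum_congr rfl fun i _ => dotp_smul_left _ _ _
      rw [this]
      exact Finset.sum_eq_zero fun i _ => by rw [hTa i, mul_zero]
    have hS0 : S a = 0 := dotp_self_eq_zero hSa
    have := Fintype.linearIndependent_iff.mp h a hS0
    funext i; exact this i
  have hSurj : Function.Surjective (T ∘ₗ S) := LinearMap.injective_iff_surjective.mp hG
  obtain ⟨a, ha⟩ := hSurj c
  exact ⟨S a, fun i => congrFun ha i⟩

end MassAux
namespace MassAux

variable {n N : ℕ}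

lemma isClosed_polytope (η : Fin N → Fin n → ℝ) (κ : Fin N → ℝ) :
    IsClosed (polytope η κ) := by
  have h : polytope η κ = ⋂ i, {x | dotp (η i) x ≤ κ i} := by
    ext x; simp [polytope, Set.mem_iInter]
  rw [h]
  exact isClosed_iInter fun i => isClosed_le (continuous_dotp _) continuous_const

lemma bounded_polytope (η : Fin N → Fin n → ℝ)
    (hpos : ∀ v : Fin n → ℝ, v ≠ 0 → ∃ i, 0 < dotp (η i) v)
    (κ' : Fin N → ℝ) (hn : 0 < n) :
    Bornology.IsBounded (polytope η κ') := by
  haveI : Nonempty (Fin n) := ⟨⟨0, hn⟩⟩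
  set g : (Fin n → ℝ) → ℝ := fun v => ∑ i, max (dotp (η i) v) 0 with hg
  have hg_cont : Continuous g :=
    continuous_finset_sum _ fun i _ => (continuous_dotp _).max continuous_const
  have hg_hom : ∀ (t : ℝ) (v : Fin n → ℝ), 0 ≤ t → g (t • v) = t * g v := by
    intro t v ht
    simp only [hg, Finset.mul_sum]
    refine Finset.sum_congr rfl fun i _ => ?_
    rw [dotp_smul_right, mul_max_of_nonneg _ _ ht, mul_zero]
  have hsph : (Metric.sphere (0 : Fin n → ℝ) 1).Nonempty :=
    NormedSpace.sphere_nonempty.mpr (by norm_num)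
  obtain ⟨v₀, hv₀mem, hmin⟩ :=
    (isCompact_sphere (0 : Fin n → ℝ) 1).exists_isMinOn hsph hg_cont.continuousOn
  have hv₀ : v₀ ≠ 0 := by
    intro h
    rw [h] at hv₀mem
    simp at hv₀mem
  have hδ : 0 < g v₀ := by
    obtain ⟨i, hi⟩ := hpos v₀ hv₀
    refine Finset.sum_pos' (fun k _ => le_max_right _ _) ⟨i, Finset.mem_univ i, ?_⟩
    exact lt_max_iff.mpr (Or.inl hi)
  set K : ℝ := ∑ i, max (κ' i) 0 with hK
  have hbound : ∀ x ∈ polytope η κ', ‖x‖ ≤ K / g v₀ := by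
    intro x hx
    have hgx_le : g x ≤ K := by
      refine Finset.sum_le_sum fun i _ => max_le_max (hx i) le_rfl
    have hlow : ‖x‖ * g v₀ ≤ g x := by
      rcases eq_or_ne x 0 with rfl | hx0
      · have h0 : ‖(0 : Fin n → ℝ)‖ * g v₀ = 0 := by simp
        rw [h0]
        exact Finset.sum_nonneg fun i _ => le_max_right _ _
      · have hu : (‖x‖⁻¹ • x) ∈ Metric.sphere (0 : Fin n → ℝ) 1 := by
          simp [norm_smul, norm_pos_iff.mpr hx0, inv_mul_cancel₀ (norm_ne_zero_iff.mpr hx0)]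
        have h1 : g v₀ ≤ g (‖x‖⁻¹ • x) := hmin hu
        have h2 : g x = ‖x‖ * g (‖x‖⁻¹ • x) := by
          rw [← hg_hom _ _ (norm_nonneg x), smul_smul,
            mul_inv_cancel₀ (norm_ne_zero_iff.mpr hx0), one_smul]
        rw [h2]
        exact mul_le_mul_of_nonneg_left h1 (norm_nonneg x)
    exact (le_div_iff₀ hδ).mpr (hlow.trans hgx_le)
  refine (Metric.isBounded_closedBall (x := (0 : Fin n → ℝ)) (r := K / g v₀)).subset ?_
  intro x hx
  rw [Metric.mem_closedBall, dist_zero_right]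
  exact hbound x hx

end MassAux
namespace MassAux

variable {n N : ℕ}

lemma interior_nonempty (η : Fin N → Fin n → ℝ) (κ' : Fin N → ℝ) (hN : 0 < N)
    (hsimple : ∀ x ∈ polytope η κ',
      LinearIndependent ℝ (fun i : {i : Fin N // dotp (η i) x = κ' i} => η i.1))
    (hne : (polytope η κ').Nonempty) :
    (interior (polytope η κ')).Nonempty := by
  classical
  obtain ⟨y, hy⟩ := hne
  obtain ⟨v, hv⟩ := exists_dual _ (hsimple y hy) (fun _ => (-1 : ℝ))
  have hNe : (Finset.univ : Finset (Fin N)).Nonempty := ⟨⟨0, hN⟩, Finset.mem_univ _⟩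
  set f : Fin N → ℝ := fun j =>
    if dotp (η j) y = κ' j then 1 else (κ' j - dotp (η j) y) / (|dotp (η j) v| + 1) with hf
  set ε := Finset.univ.inf' hNe f with hεdef
  have hε : 0 < ε := by
    rw [hεdef, Finset.lt_inf'_iff]
    intro j _
    by_cases hj : dotp (η j) y = κ' j
    · simp [hf, hj]
    · have hslack : dotp (η j) y < κ' j := lt_of_le_of_ne (hy j) hj
      have : (0:ℝ) < |dotp (η j) v| + 1 := by positivity
      simp only [hf, hj, if_false]
      exact div_pos (by linarith) this
  have hU : ∀ i, dotp (η i) (y + ε • v) < κ' i := by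
    intro i
    rw [dotp_add_right, dotp_smul_right]
    by_cases hi : dotp (η i) y = κ' i
    · have h1 := hv ⟨i, hi⟩
      simp only at h1
      rw [hi, h1]
      linarith
    · have hslack : dotp (η i) y < κ' i := lt_of_le_of_ne (hy i) hi
      have hεle : ε ≤ (κ' i - dotp (η i) y) / (|dotp (η i) v| + 1) := by
        have h2 := Finset.inf'_le f (Finset.mem_univ i)
        rw [← hεdef] at h2
        simpa [hf, hi] using h2
      have hpos1 : (0:ℝ) < |dotp (η i) v| + 1 := by positivity
      have h3 : ε * (|dotp (η i) v| + 1) ≤ κ' i - dotp (η i) y :=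
        (le_div_iff₀ hpos1).mp hεle
      have h4 : ε * dotp (η i) v ≤ ε * |dotp (η i) v| :=
        mul_le_mul_of_nonneg_left (le_abs_self _) hε.le
      nlinarith
  have hopen : IsOpen {x : Fin n → ℝ | ∀ i, dotp (η i) x < κ' i} := by
    have h : {x : Fin n → ℝ | ∀ i, dotp (η i) x < κ' i}
        = ⋂ i, {x | dotp (η i) x < κ' i} := by
      ext x; simp [Set.mem_iInter]
    rw [h]
    exact isOpen_iInter_of_finite fun i =>
      isOpen_lt (continuous_dotp _) continuous_const
  have hsub : {x : Fin n → ℝ | ∀ i, dotp (η i) x < κ' i} ⊆ interior (polytope η κ') :=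
    hopen.subset_interior_iff.mpr (fun x hx i => le_of_lt (hx i))
  exact ⟨y + ε • v, hsub hU⟩

lemma star_core {s : Set (Fin n → ℝ)} (hsm : MeasurableSet s) (hcomp : IsCompact s)
    (w ξ : Fin n → ℝ) (d : ℝ) (hwξ : dotp w ξ = 2)
    (hmap : ∀ x ∈ s, x + (d - dotp w x) • ξ ∈ s) :
    ∫ x in s, dotp w x = (volume s).toReal * d := by
  classical
  set A : (Fin n → ℝ) →ₗ[ℝ] (Fin n → ℝ) :=
    { toFun := fun x => x - dotp w x • ξ
      map_add' := by
        intro a b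
        show a + b - dotp w (a + b) • ξ = (a - dotp w a • ξ) + (b - dotp w b • ξ)
        rw [dotp_add_right, add_smul]; abel
      map_smul' := by
        intro t a
        show t • a - dotp w (t • a) • ξ = t • (a - dotp w a • ξ)
        rw [dotp_smul_right, mul_smul, smul_sub] } with hA
  have hAx : ∀ x, A x = x - dotp w x • ξ := fun x => rfl
  have hwA : ∀ x, dotp w (A x) = - dotp w x := by
    intro x
    rw [hAx, dotp_sub_right, dotp_smul_right, hwξ]; ring
  have hAA : ∀ x, A (A x) = x := by
    intro x
    rw [hAx (A x), hwA, hAx, neg_smul, sub_neg_eq_add, sub_add_cancel]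
  set φ : (Fin n → ℝ) → (Fin n → ℝ) := fun x => A x + d • ξ with hφ
  have hφx : ∀ x, φ x = x + (d - dotp w x) • ξ := by
    intro x
    rw [hφ]
    simp only [hAx, sub_smul]
    abel
  have hφφ : Function.Involutive φ := by
    intro x
    have hAξ : A ξ = -ξ := by
      rw [hAx, hwξ]
      module
    calc φ (φ x) = A (A x) + d • A ξ + d • ξ := by
          rw [hφ]
          simp only [A.map_add, A.map_smul]
    _ = x := by rw [hAA, hAξ]; module
  have hdet2 : LinearMap.det A * LinearMap.det A = 1 := by
    rw [← LinearMap.det_comp]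
    have h : A ∘ₗ A = LinearMap.id := LinearMap.ext hAA
    rw [h, LinearMap.det_id]
  have hdet0 : LinearMap.det A ≠ 0 := by
    intro h; rw [h, mul_zero] at hdet2; exact zero_ne_one hdet2
  have habs : |(LinearMap.det A)⁻¹| = 1 := by
    rcases mul_self_eq_one_iff.mp hdet2 with h | h <;> rw [h] <;> norm_num
  have hmapvol : Measure.map A volume = volume := by
    rw [Real.map_linearMap_volume_pi_eq_smul_volume_pi hdet0, habs]
    simp
  have hAcont : Continuous A := A.continuous_of_finiteDimensional
  have hφcont : Continuous φ := by
    rw [hφ]; exact hAcont.add continuous_const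
  have hφmeas : Measurable φ := hφcont.measurable
  have hmp : MeasurePreserving φ volume volume := by
    refine ⟨hφmeas, ?_⟩
    have hcomp2 : φ = (fun y => y + d • ξ) ∘ A := rfl
    rw [hcomp2, ← Measure.map_map (measurable_add_const _) hAcont.measurable,
      hmapvol, map_add_right_eq_self]
  have hemb : MeasurableEmbedding φ := by
    let e : MeasurableEquiv (Fin n → ℝ) (Fin n → ℝ) :=
      { toEquiv := hφφ.toPerm φ
        measurable_toFun := hφmeas
        measurable_invFun := hφmeas }
    exact e.measurableEmbedding
  have hpre : φ ⁻¹' s = s := by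
    ext x
    simp only [Set.mem_preimage]
    constructor
    · intro h
      have h2 := hmap _ h
      rw [← hφx (φ x), hφφ x] at h2
      exact h2
    · intro h
      have h2 := hmap x h
      rwa [← hφx x] at h2
  have key := hmp.setIntegral_preimage_emb hemb (fun y => dotp w y) s
  rw [hpre] at key
  have hφval : ∀ x, dotp w (φ x) = 2 * d - dotp w x := by
    intro x
    rw [hφx, dotp_add_right, dotp_smul_right, hwξ]; ring
  simp_rw [hφval] at key
  have hint : IntegrableOn (fun x => dotp w x) s volume :=
    (continuous_dotp w).continuousOn.integrableOn_compact hcomp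
  have hconst : IntegrableOn (fun _ : Fin n → ℝ => 2 * d) s volume :=
    integrableOn_const hcomp.measure_lt_top.ne
  rw [integral_sub hconst hint, setIntegral_const] at key
  have : volume.real s • (2 * d) = (volume s).toReal * (2 * d) := rfl
  rw [this] at key
  linarith

lemma star_centroid {s : Set (Fin n → ℝ)} (hsm : MeasurableSet s) (hcomp : IsCompact s)
    (hvol : volume s ≠ 0)
    (w ξ : Fin n → ℝ) (d : ℝ) (hwξ : dotp w ξ = 2)
    (hmap : ∀ x ∈ s, x + (d - dotp w x) • ξ ∈ s) :
    dotp w (⨍ x in s, x) = d := by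
  have hVne : (volume s).toReal ≠ 0 := by
    rw [ENNReal.toReal_ne_zero]
    exact ⟨hvol, hcomp.measure_lt_top.ne⟩
  have hkey := star_core hsm hcomp w ξ d hwξ hmap
  have hid : IntegrableOn (fun x : Fin n → ℝ => x) s volume :=
    continuousOn_id.integrableOn_compact hcomp
  let Lw : (Fin n → ℝ) →ₗ[ℝ] ℝ :=
    { toFun := fun x => dotp w x
      map_add' := dotp_add_right w
      map_smul' := by intro t a; simp [dotp_smul_right] }
  let L : (Fin n → ℝ) →L[ℝ] ℝ := LinearMap.toContinuousLinearMap Lw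
  have hcomm : ∫ x in s, dotp w x = dotp w (∫ x in s, x) := by
    have := L.integral_comp_comm hid
    exact this
  rw [setAverage_eq, dotp_smul_right, ← hcomm, hkey, measureReal_def]
  field_simp

end MassAux

namespace MassAux

variable {n N : ℕ}

lemma dotp_neg_right (v x : Fin n → ℝ) : dotp v (-x) = -dotp v x := by
  simp [dotp, Finset.sum_neg_distrib]

lemma facetEquiv_ne {η : Fin N → Fin n → ℝ} {i j : Fin N} (ξ : Fin n → ℝ)
    (h1 : dotp (η i) ξ = 1) (h2 : dotp (η j) ξ = -1) : i ≠ j := by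
  intro h
  rw [h, h2] at h1
  norm_num at h1

lemma facetEquiv_symm {η : Fin N → Fin n → ℝ} {i j : Fin N}
    (h : FacetEquiv η i j) : FacetEquiv η j i := by
  rcases h with rfl | ⟨ξ, h1, h2, h3⟩
  · exact Or.inl rfl
  · refine Or.inr ⟨-ξ, ?_, ?_, ?_⟩
    · rw [dotp_neg_right, h2]; ring
    · rw [dotp_neg_right, h1]
    · intro k hk1 hk2
      rw [dotp_neg_right, h3 k hk2 hk1, neg_zero]

lemma facetEquiv_trans {η : Fin N → Fin n → ℝ} {i j k : Fin N}
    (h : FacetEquiv η i j) (h' : FacetEquiv η j k) : FacetEquiv η i k := by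
  rcases h with rfl | ⟨ξ, h1, h2, h3⟩
  · exact h'
  rcases h' with rfl | ⟨ξ', h1', h2', h3'⟩
  · exact Or.inr ⟨ξ, h1, h2, h3⟩
  have hij : i ≠ j := facetEquiv_ne ξ h1 h2
  have hjk : j ≠ k := facetEquiv_ne ξ' h1' h2'
  rcases eq_or_ne i k with rfl | hik
  · exact Or.inl rfl
  refine Or.inr ⟨ξ + ξ', ?_, ?_, ?_⟩
  · rw [dotp_add_right, h1, h3' i hij hik]; ring
  · rw [dotp_add_right, h3 k (Ne.symm hik) (Ne.symm hjk), h2']; ring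
  · intro m hmi hmk
    rcases eq_or_ne m j with rfl | hmj
    · rw [dotp_add_right, h2, h1']; ring
    · rw [dotp_add_right, h3 m hmi hmj, h3' m hmj hmk, add_zero]

lemma facetEquiv_centroid (η : Fin N → Fin n → ℝ) (κ' : Fin N → ℝ)
    (hcomp : IsCompact (polytope η κ')) (hvol : volume (polytope η κ') ≠ 0)
    {i j : Fin N} (h : FacetEquiv η i j) :
    dotp (η i) (centroid η κ') - κ' i = dotp (η j) (centroid η κ') - κ' j := by
  rcases h with rfl | ⟨ξ, h1, h2, h3⟩
  · rfl
  have hij : i ≠ j := facetEquiv_ne ξ h1 h2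
  have hwξ : dotp (η i - η j) ξ = 2 := by rw [dotp_sub_left, h1, h2]; ring
  have hmap : ∀ x ∈ polytope η κ',
      x + ((κ' i - κ' j) - dotp (η i - η j) x) • ξ ∈ polytope η κ' := by
    intro x hx k
    rw [dotp_add_right, dotp_smul_right, dotp_sub_left]
    rcases eq_or_ne k i with rfl | hki
    · rw [h1, mul_one]
      linarith [hx j]
    · rcases eq_or_ne k j with rfl | hkj
      · rw [h2]
        have := hx i
        nlinarith [hx i]
      · rw [h3 k hki hkj, mul_zero, add_zero]
        exact hx k
  have hres := star_centroid (isClosed_polytope η κ').measurableSet hcomp hvol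
      (η i - η j) ξ (κ' i - κ' j) hwξ hmap
  have hc : centroid η κ' = ⨍ x in polytope η κ', x := rfl
  rw [hc]
  rw [dotp_sub_left] at hres
  linarith

end MassAux


/-- An inessential function `H = Σ β_i η_i` satisfies `⟨H, c_Δ(κ)⟩ = Σ β_i κ_i` on the
chamber; in particular it is mass linear. -/
theorem stmt13 {n N : ℕ} (η : Fin N → Fin n → ℝ) (κ : Fin N → ℝ) (H : Fin n → ℝ)
    (β : Fin N → ℝ) (hΔ : GoodPolytope η κ)
    (hHβ : H = ∑ i, β i • η i)
    (hβ : ∀ I : Finset (Fin N), IsEquivClass η I → ∑ i ∈ I, β i = 0) :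
    ∀ κ' ∈ chamber η κ, dotp H (centroid η κ') = ∑ i, β i * κ' i := by
  classical
  intro κ' hκ'
  rcases Nat.eq_zero_or_pos N with hN | hN
  · subst hN
    rw [hHβ]
    simp [dotp]
  rcases Nat.eq_zero_or_pos n with hn | hn
  · exfalso
    subst hn
    obtain ⟨x, hx⟩ := hΔ.2.2.2 ⟨0, hN⟩
    have hli := hΔ.1 x hx.1
    have hnz := hli.ne_zero ⟨⟨0, hN⟩, hx.2⟩
    exact hnz (funext fun j => j.elim0)
  obtain ⟨hsimple', hanal⟩ := connectedComponentIn_subset _ _ hκ'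
  -- the polytope Δ(κ') is nonempty
  have hne : (polytope η κ').Nonempty := by
    obtain ⟨x, hx⟩ := hΔ.2.2.2 ⟨0, hN⟩
    have h1 : (⋂ i ∈ ({(⟨0, hN⟩ : Fin N)} : Finset (Fin N)), facet η κ i).Nonempty := by
      refine ⟨x, ?_⟩
      simp only [Finset.mem_singleton, Set.iInter_iInter_eq_left]
      exact hx
    obtain ⟨y, hy⟩ := (hanal _).mpr h1
    simp only [Finset.mem_singleton, Set.iInter_iInter_eq_left] at hy
    exact ⟨y, hy.1⟩
  -- no direction is nonpositive against all conormals
  have hpos : ∀ v : Fin n → ℝ, v ≠ 0 → ∃ i, 0 < dotp (η i) v := by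
    intro v hv
    by_contra hcon
    push_neg at hcon
    obtain ⟨x₀, hx₀i⟩ := hΔ.2.2.1
    have hx₀ : x₀ ∈ polytope η κ := interior_subset hx₀i
    obtain ⟨R, hR⟩ := hΔ.2.1.subset_closedBall 0
    have hR0 : ‖x₀‖ ≤ R := by
      have := hR hx₀
      rwa [Metric.mem_closedBall, dist_zero_right] at this
    have hvn : 0 < ‖v‖ := norm_pos_iff.mpr hv
    set t : ℝ := (R + ‖x₀‖ + 1) / ‖v‖ with ht
    have ht0 : 0 ≤ t := by
      apply div_nonneg _ hvn.le
      nlinarith [norm_nonneg x₀]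
    have hmem : x₀ + t • v ∈ polytope η κ := by
      intro i
      rw [MassAux.dotp_add_right, MassAux.dotp_smul_right]
      have h1 : t * dotp (η i) v ≤ 0 := mul_nonpos_of_nonneg_of_nonpos ht0 (hcon i)
      linarith [hx₀ i]
    have h2 := hR hmem
    rw [Metric.mem_closedBall, dist_zero_right] at h2
    have h3 : ‖t • v‖ = R + ‖x₀‖ + 1 := by
      rw [norm_smul, Real.norm_eq_abs, abs_of_nonneg ht0, ht, div_mul_cancel₀]
      exact hvn.ne'
    have h4 : ‖t • v‖ ≤ ‖x₀ + t • v‖ + ‖x₀‖ := by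
      have h5 := norm_sub_le (x₀ + t • v) x₀
      have h6 : x₀ + t • v - x₀ = t • v := by abel
      rwa [h6] at h5
    linarith
  have hbd : Bornology.IsBounded (polytope η κ') := MassAux.bounded_polytope η hpos κ' hn
  have hcomp : IsCompact (polytope η κ') :=
    Metric.isCompact_of_isClosed_isBounded (MassAux.isClosed_polytope η κ') hbd
  have hintne : (interior (polytope η κ')).Nonempty :=
    MassAux.interior_nonempty η κ' hN hsimple' hne
  have hvol : volume (polytope η κ') ≠ 0 :=
    (Measure.measure_pos_of_nonempty_interior volume hintne).ne'
  set c := centroid η κ' with hc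
  set γ : Fin N → ℝ := fun i => dotp (η i) c - κ' i with hγ
  have hcent : ∀ {i j : Fin N}, FacetEquiv η i j → γ i = γ j := by
    intro i j h
    have := MassAux.facetEquiv_centroid η κ' hcomp hvol h
    simpa [hγ, hc] using this
  set I : Fin N → Finset (Fin N) := fun i => Finset.univ.filter (fun j => FacetEquiv η i j)
    with hI
  have hmemI : ∀ i j, j ∈ I i ↔ FacetEquiv η i j := by intro i j; simp [hI]
  have hrefl : ∀ i, FacetEquiv η i i := fun i => Or.inl rfl
  have hInonempty : ∀ i, (I i).Nonempty := fun i => ⟨i, (hmemI i i).mpr (hrefl i)⟩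
  have hIeq : ∀ i j, FacetEquiv η i j → I i = I j := by
    intro i j h
    ext k
    rw [hmemI, hmemI]
    exact ⟨fun h2 => MassAux.facetEquiv_trans (MassAux.facetEquiv_symm h) h2,
           fun h2 => MassAux.facetEquiv_trans h h2⟩
  set r : Fin N → Fin N := fun i => (I i).min' (hInonempty i) with hr
  have hmin_congr : ∀ (s t : Finset (Fin N)) (hs : s.Nonempty) (ht : t.Nonempty),
      s = t → s.min' hs = t.min' ht := by
    rintro s t hs ht rfl; rfl
  have hrE : ∀ i, FacetEquiv η i (r i) := fun i => (hmemI _ _).mp ((I i).min'_mem _)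
  have hrr : ∀ i, r (r i) = r i := fun i =>
    hmin_congr _ _ _ _ (hIeq (r i) i (MassAux.facetEquiv_symm (hrE i)))
  have hzero : ∑ i, β i * γ i = 0 := by
    have h1 : ∑ i, β i * γ i = ∑ i, β i * γ (r i) :=
      Finset.sum_congr rfl fun i _ => by rw [hcent (hrE i)]
    have h2 : ∑ k, ∑ i ∈ Finset.univ.filter (fun i => r i = k), (β i * γ (r i))
        = ∑ i, β i * γ (r i) :=
      Finset.sum_fiberwise_of_maps_to (fun i _ => Finset.mem_univ (r i)) _
    rw [h1, ← h2]
    refine Finset.sum_eq_zero fun k _ => ?_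
    have hconst : ∑ i ∈ Finset.univ.filter (fun i => r i = k), β i * γ (r i)
        = (∑ i ∈ Finset.univ.filter (fun i => r i = k), β i) * γ k := by
      rw [Finset.sum_mul]
      refine Finset.sum_congr rfl fun i hi => ?_
      rw [(Finset.mem_filter.mp hi).2]
    rw [hconst]
    by_cases hk : r k = k
    · have hfib : Finset.univ.filter (fun i => r i = k) = I k := by
        ext i
        simp only [Finset.mem_filter, Finset.mem_univ, true_and, hmemI]
        constructor
        · intro h
          rw [← h]
          exact MassAux.facetEquiv_symm (hrE i)
        · intro h
          have hIik : I i = I k := hIeq i k (MassAux.facetEquiv_symm h)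
          calc r i = (I k).min' (hInonempty k) := hmin_congr _ _ _ _ hIik
          _ = r k := rfl
          _ = k := hk
      have hclass : IsEquivClass η (I k) := by
        refine ⟨hInonempty k, ?_, ?_⟩
        · intro a ha b hb
          exact MassAux.facetEquiv_trans (MassAux.facetEquiv_symm ((hmemI k a).mp ha))
            ((hmemI k b).mp hb)
        · intro a ha m hm
          exact (hmemI k m).mpr (MassAux.facetEquiv_trans ((hmemI k a).mp ha) hm)
      rw [hfib, hβ _ hclass, zero_mul]
    · have hfib : Finset.univ.filter (fun i => r i = k) = ∅ := by
        ext i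
        simp only [Finset.mem_filter, Finset.mem_univ, true_and, Finset.notMem_empty,
          iff_false]
        intro h
        apply hk
        rw [← h]
        exact hrr i
      rw [hfib]
      simp
  have hterm : ∀ i, dotp (β i • η i) c = β i * κ' i + β i * γ i := by
    intro i
    rw [MassAux.dotp_smul_left]
    simp only [hγ]
    ring
  rw [hHβ, MassAux.dotp_sum_left]
  calc ∑ i, dotp (β i • η i) c = ∑ i, (β i * κ' i + β i * γ i) :=
        Finset.sum_congr rfl fun i _ => hterm i
  _ = ∑ i, β i * κ' i + ∑ i, β i * γ i := Finset.sum_add_distrib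
  _ = ∑ i, β i * κ' i := by rw [hzero, add_zero]
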